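/- Let X be a nonempty set, M a positive integer, and for m = 1,…,M let A_m : X → ℝ with A_m ≥ 0 and B_m : X → ℝ with B_m > 0. Then for every x ∈ X, the supremum over y ∈ ℝ^M of Σ_{m=1}^M (2y_m√(A_m(x)) − y_m²B_m(x)) equals Σ_{m=1}^M A_m(x)/B_m(x) and is attained at y_m = √(A_m(x))/B_m(x); consequently sup_{x∈X} Σ_m A_m(x)/B_m(x) = sup_{x∈X, y∈ℝ^M} Σ_m (2y_m√(A_m(x)) − y_m²B_m(x)), and the two maximization problems have the same optimal x-solutions. -/

import Mathlib

lemma aux_le (a b y : ℝ) (ha : 0 ≤ a) (hb : 0 < b) :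
    2 * y * Real.sqrt a - y ^ 2 * b ≤ a / b := by
  rw [le_div_iff₀ hb]
  nlinarith [sq_nonneg (y * b - Real.sqrt a), Real.sq_sqrt ha]

lemma aux_eq (a b : ℝ) (ha : 0 ≤ a) (hb : 0 < b) :
    2 * (Real.sqrt a / b) * Real.sqrt a - (Real.sqrt a / b) ^ 2 * b = a / b := by
  have h := Real.sq_sqrt ha
  field_simp
  linear_combination h

/-- The quadratic transform for sum-of-ratios fractional programming (Lemma 2 of the paper):
for each `x` the inner supremum over `y` of `∑ (2yₘ√(Aₘx) − yₘ²Bₘx)` equals `∑ Aₘx/Bₘx`,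
attained at `yₘ = √(Aₘx)/Bₘx`; hence both maximization problems have the same optimal value
and the same optimal `x`-solutions. -/
theorem stmt_16 {X : Type*} [Nonempty X] (M : ℕ) (hM : 0 < M)
    (A B : Fin M → X → ℝ) (hA : ∀ m x, 0 ≤ A m x) (hB : ∀ m x, 0 < B m x) :
    (∀ x : X,
      IsGreatest
        {t : ℝ | ∃ y : Fin M → ℝ,
          t = ∑ m, (2 * y m * Real.sqrt (A m x) - (y m) ^ 2 * B m x)}
        (∑ m, A m x / B m x)) ∧
    (∀ x : X,
      ∑ m, (2 * (Real.sqrt (A m x) / B m x) * Real.sqrt (A m x)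
          - (Real.sqrt (A m x) / B m x) ^ 2 * B m x)
        = ∑ m, A m x / B m x) ∧
    sSup {t : ℝ | ∃ x : X, t = ∑ m, A m x / B m x}
      = sSup {t : ℝ | ∃ x : X, ∃ y : Fin M → ℝ,
          t = ∑ m, (2 * y m * Real.sqrt (A m x) - (y m) ^ 2 * B m x)} ∧
    (∀ x₀ : X,
      (∀ x : X, ∑ m, A m x / B m x ≤ ∑ m, A m x₀ / B m x₀) ↔
      (∃ y₀ : Fin M → ℝ, ∀ (x : X) (y : Fin M → ℝ),
        ∑ m, (2 * y m * Real.sqrt (A m x) - (y m) ^ 2 * B m x)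
          ≤ ∑ m, (2 * y₀ m * Real.sqrt (A m x₀) - (y₀ m) ^ 2 * B m x₀))) := by
  have heq : ∀ x : X,
      ∑ m, (2 * (Real.sqrt (A m x) / B m x) * Real.sqrt (A m x)
          - (Real.sqrt (A m x) / B m x) ^ 2 * B m x) = ∑ m, A m x / B m x := by
    intro x
    exact Finset.sum_congr rfl fun m _ => aux_eq _ _ (hA m x) (hB m x)
  have hle : ∀ (x : X) (y : Fin M → ℝ),
      ∑ m, (2 * y m * Real.sqrt (A m x) - (y m) ^ 2 * B m x) ≤ ∑ m, A m x / B m x := by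
    intro x y
    exact Finset.sum_le_sum fun m _ => aux_le _ _ _ (hA m x) (hB m x)
  have hgr : ∀ x : X,
      IsGreatest
        {t : ℝ | ∃ y : Fin M → ℝ,
          t = ∑ m, (2 * y m * Real.sqrt (A m x) - (y m) ^ 2 * B m x)}
        (∑ m, A m x / B m x) := by
    intro x
    constructor
    · exact ⟨fun m => Real.sqrt (A m x) / B m x, (heq x).symm⟩
    · rintro t ⟨y, rfl⟩
      exact hle x y
  refine ⟨hgr, heq, ?_, ?_⟩
  · -- sSup equality
    set S1 := {t : ℝ | ∃ x : X, t = ∑ m, A m x / B m x} with hS1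
    set S2 := {t : ℝ | ∃ x : X, ∃ y : Fin M → ℝ,
          t = ∑ m, (2 * y m * Real.sqrt (A m x) - (y m) ^ 2 * B m x)} with hS2
    have hsub : S1 ⊆ S2 := by
      rintro t ⟨x, rfl⟩
      exact ⟨x, fun m => Real.sqrt (A m x) / B m x, (heq x).symm⟩
    have hne1 : S1.Nonempty := ⟨_, Classical.arbitrary X, rfl⟩
    have hne2 : S2.Nonempty := hne1.mono hsub
    have hdom : ∀ t ∈ S2, ∃ s ∈ S1, t ≤ s := by
      rintro t ⟨x, y, rfl⟩
      exact ⟨∑ m, A m x / B m x, ⟨x, rfl⟩, hle x y⟩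
    by_cases hbdd : BddAbove S2
    · have hbdd1 : BddAbove S1 := hbdd.mono hsub
      apply le_antisymm
      · exact csSup_le_csSup hbdd hne1 hsub
      · apply csSup_le hne2
        rintro t ht
        obtain ⟨s, hs, hts⟩ := hdom t ht
        exact hts.trans (le_csSup hbdd1 hs)
    · have hbdd1 : ¬ BddAbove S1 := by
        intro ⟨c, hc⟩
        apply hbdd
        refine ⟨c, fun t ht => ?_⟩
        obtain ⟨s, hs, hts⟩ := hdom t ht
        exact hts.trans (hc hs)
      rw [Real.sSup_of_not_bddAbove hbdd1, Real.sSup_of_not_bddAbove hbdd]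
  · intro x₀
    constructor
    · intro h
      refine ⟨fun m => Real.sqrt (A m x₀) / B m x₀, fun x y => ?_⟩
      calc ∑ m, (2 * y m * Real.sqrt (A m x) - (y m) ^ 2 * B m x)
          ≤ ∑ m, A m x / B m x := hle x y
        _ ≤ ∑ m, A m x₀ / B m x₀ := h x
        _ = _ := (heq x₀).symm
    · rintro ⟨y₀, hy₀⟩ x
      calc ∑ m, A m x / B m x
          = ∑ m, (2 * (Real.sqrt (A m x) / B m x) * Real.sqrt (A m x)
              - (Real.sqrt (A m x) / B m x) ^ 2 * B m x) := (heq x).symm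
        _ ≤ ∑ m, (2 * y₀ m * Real.sqrt (A m x₀) - (y₀ m) ^ 2 * B m x₀) :=
            hy₀ x _
        _ ≤ ∑ m, A m x₀ / B m x₀ := hle x₀ y₀
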